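/- Let 0 < v_w < 1, v_u = 1 − v_w, and R_0 > 1. Then the quadratic v_u k² − (2v_w − 1)k + v_w(R_0⁻² − 1) = 0 has exactly one strictly positive real root, namely k₁ = (2v_w − 1 + sqrt(1 − 4v_w v_u R_0⁻²))/(2v_u). -/

import Mathlib

/-- for `0 < v_w < 1` and `R₀ > 1`, the quadratic
`v_u k² − (2v_w − 1)k + v_w(R₀⁻² − 1) = 0` has exactly one strictly positive
real root, namely `k₁`. -/
theorem quadratic_unique_positive_root
    (vw R0 : ℝ) (hvw0 : 0 < vw) (hvw1 : vw < 1) (hR0 : 1 < R0)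
    (k1 : ℝ)
    (hk1 : k1 = (2 * vw - 1 + Real.sqrt (1 - 4 * vw * (1 - vw) * (1 / R0 ^ 2)))
      / (2 * (1 - vw))) :
    {k : ℝ | 0 < k ∧
      (1 - vw) * k ^ 2 - (2 * vw - 1) * k + vw * (1 / R0 ^ 2 - 1) = 0}
      = {k1} := by
  set s := Real.sqrt (1 - 4 * vw * (1 - vw) * (1 / R0 ^ 2)) with hs
  have ha : 0 < 1 - vw := by linarith
  have ha' : (1 : ℝ) - vw ≠ 0 := ne_of_gt ha
  have hR0' : (0:ℝ) < R0 := by linarith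
  have hR0ne : R0 ≠ 0 := ne_of_gt hR0'
  have hR2 : (1:ℝ)/R0^2 < 1 := by
    rw [div_lt_one (by positivity)]
    nlinarith
  have hR2pos : (0:ℝ) < 1/R0^2 := by positivity
  have hD : (2*vw-1)^2 < 1 - 4 * vw * (1 - vw) * (1 / R0 ^ 2) := by
    nlinarith [mul_pos hvw0 ha]
  have hDpos : 0 ≤ 1 - 4 * vw * (1 - vw) * (1 / R0 ^ 2) := by
    nlinarith [sq_nonneg (2*vw-1)]
  have hs2 : s^2 = 1 - 4 * vw * (1 - vw) * (1 / R0 ^ 2) := Real.sq_sqrt hDpos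
  have hsnn : 0 ≤ s := Real.sqrt_nonneg _
  have habs : |2*vw-1| < s := by
    apply lt_of_pow_lt_pow_left₀ 2 hsnn
    rw [sq_abs, hs2]; exact hD
  obtain ⟨habs1, habs2⟩ := abs_lt.mp habs
  have hk1pos : 0 < k1 := by
    rw [hk1]; apply div_pos (by linarith) (by linarith)
  have ht : 2*(1-vw)*k1 - (2*vw-1) = s := by
    rw [hk1]; field_simp; ring
  have key : ∀ x:ℝ, (1-vw)*x^2 - (2*vw-1)*x + vw*(1/R0^2-1)
      = ((2*(1-vw)*x - (2*vw-1))^2 - (1 - 4*vw*(1-vw)*(1/R0^2)))/(4*(1-vw)) := by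
    intro x; field_simp; ring
  ext k
  simp only [Set.mem_setOf_eq, Set.mem_singleton_iff]
  constructor
  · rintro ⟨hkpos, heq⟩
    rw [key k] at heq
    have hnum : (2*(1-vw)*k - (2*vw-1))^2 - (1 - 4*vw*(1-vw)*(1/R0^2)) = 0 := by
      have := (div_eq_zero_iff.mp heq).resolve_right (by positivity)
      exact this
    have hsq : (2*(1-vw)*k - (2*vw-1))^2 = s^2 := by rw [hs2]; linarith
    have hfac : ((2*(1-vw)*k - (2*vw-1)) - s) * ((2*(1-vw)*k - (2*vw-1)) + s) = 0 := by
      nlinarith [hsq]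
    rcases mul_eq_zero.mp hfac with h | h
    · rw [hk1]
      field_simp
      linarith
    · exfalso
      nlinarith [mul_pos ha hkpos]
  · rintro rfl
    refine ⟨hk1pos, ?_⟩
    rw [key k, ht, hs2]
    simp
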